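/- Parameterize the left barrier curve by x_bar(s) = γ(s) − ν·d_ccw(s_D, s)·R_{φ*}·γ'(s), where R_{φ*} is rotation by φ* = arccos(ν) counter-clockwise. Then the tangent vector B = dx_bar/ds is orthogonal to the unit vector from x_bar toward γ(s) — i.e., B · (γ(s) − x_A)/‖γ(s) − x_A‖ = 0 for x_A on the barrier. -/

import Mathlib

open Real Set
open scoped InnerProductSpace

noncomputable section

abbrev E2 := EuclideanSpace ℝ (Fin 2)

/-- Parameterize the left barrier by
`x_bar(s) = γ(s) − ν·(s − s_D)·R(γ'(s))`, where `R` is the (linear isometric) rotation by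
`φ* = arccos ν`. Then the tangent vector `B = dx_bar/ds` is orthogonal to the unit vector
from `x_bar(s)` toward `γ(s)`. -/
theorem barrier_tangent_orthogonal
    (ν : ℝ) (hν : ν ∈ Set.Ioo (0:ℝ) 1)
    (γ γT γTT : ℝ → E2)
    (hγ : ∀ s, HasDerivAt γ (γT s) s)
    (hγT : ∀ s, HasDerivAt γT (γTT s) s)
    (hunit : ∀ s, ‖γT s‖ = 1)
    -- `R` is rotation by the angle `φ* = arccos ν`
    (R : E2 ≃ₗᵢ[ℝ] E2)
    (hR : ∀ v : E2, ⟪(R v : E2), v⟫_ℝ = Real.cos (Real.arccos ν) * ‖v‖ ^ 2)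
    (sD s : ℝ) (hs : sD < s)
    (xbar : ℝ → E2)
    (hxbar : ∀ τ, xbar τ = γ τ - (ν * (τ - sD)) • R (γT τ))
    (B : E2)
    (hB : B = γT s - ν • R (γT s) - (ν * (s - sD)) • R (γTT s)) :
    HasDerivAt xbar B s ∧
    ⟪B, (‖γ s - xbar s‖)⁻¹ • (γ s - xbar s)⟫_ℝ = 0 := by
  have hxf : xbar = fun τ => γ τ - (ν * (τ - sD)) • R (γT τ) := funext hxbar
  -- derivative of τ ↦ R (γT τ)
  have hRcomp : ∀ τ, HasDerivAt (fun t => R (γT t)) (R (γTT τ)) τ := by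
    intro τ
    have := (R.toContinuousLinearEquiv : E2 →L[ℝ] E2).hasFDerivAt.comp_hasDerivAt τ (hγT τ)
    exact this
  have hscal : HasDerivAt (fun τ => ν * (τ - sD)) ν s := by
    simpa using ((hasDerivAt_id s).sub_const sD).const_mul ν
  have hsmul := hscal.smul (hRcomp s)
  have hderiv : HasDerivAt xbar B s := by
    rw [hxf, hB]
    have := (hγ s).sub hsmul
    exact this.congr_deriv (by rw [sub_sub, add_comm])
  refine ⟨hderiv, ?_⟩
  -- orthogonality of γTT and γT
  have hTT : ⟪γTT s, γT s⟫_ℝ = 0 := by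
    have hconst : HasDerivAt (fun τ => ⟪γT τ, γT τ⟫_ℝ) 0 s := by
      have : (fun τ => ⟪γT τ, γT τ⟫_ℝ) = fun _ => (1 : ℝ) := by
        funext τ
        rw [real_inner_self_eq_norm_sq, hunit]; norm_num
      rw [this]; exact hasDerivAt_const s 1
    have h2 := (hγT s).inner ℝ (hγT s)
    have := h2.unique hconst
    have hsymm : ⟪γT s, γTT s⟫_ℝ = ⟪γTT s, γT s⟫_ℝ := real_inner_comm _ _
    rw [hsymm] at this
    linarith
  have hvec : γ s - xbar s = (ν * (s - sD)) • R (γT s) := by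
    rw [hxbar]; abel
  have hν1 : -1 ≤ ν := by linarith [hν.1]
  have hν2 : ν ≤ 1 := le_of_lt hν.2
  have hcos : Real.cos (Real.arccos ν) = ν := Real.cos_arccos hν1 hν2
  have hinner : ⟪B, R (γT s)⟫_ℝ = 0 := by
    rw [hB, inner_sub_left, inner_sub_left, inner_smul_left, inner_smul_left]
    have h1 : ⟪γT s, R (γT s)⟫_ℝ = ν := by
      rw [real_inner_comm, hR, hcos, hunit]; ring
    have h2 : ⟪R (γT s), R (γT s)⟫_ℝ = 1 := by
      rw [real_inner_self_eq_norm_sq, R.norm_map, hunit]; norm_num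
    have h3 : ⟪R (γTT s), R (γT s)⟫_ℝ = 0 := by
      rw [R.inner_map_map, hTT]
    rw [h1, h2, h3]; simp
  rw [hvec, inner_smul_right, inner_smul_right, hinner]
  ring
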